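/- For every integer n > 1, the graph G* has metric dimension at most ⌈log₂(n)⌉ + 1; indeed, the set S* consisting of all ⌈log₂(n)⌉ level-0 vertices together with the vertex F is a resolving set of G*. -/

import Mathlib

/-- A set `R` of vertices resolves the graph `H` if every pair of distinct
vertices is distinguished by some vertex of `R`. -/
def resolves {V : Type*} (H : SimpleGraph V) (R : Set V) : Prop :=
  ∀ a b : V, a ≠ b → ∃ x ∈ R, H.dist a x ≠ H.dist b x

/-- The metric dimension: the least cardinality of a (finite) resolving set. -/
noncomputable def metricDim {V : Type*} (H : SimpleGraph V) : ℕ :=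
  sInf {k | ∃ R : Finset V, R.card = k ∧ resolves H (R : Set V)}

/-- The vertices of the graph `G*`: `⌈log₂ n⌉` level-0 vertices, levels 1–3 with
`n − 1` vertices each (`mid l i` is the vertex of level `l+1` with index `i+1`),
and the two special vertices `E` and `F`. -/
inductive GStarV (n : ℕ) where
  | lvl0 (j : Fin (Nat.clog 2 n))
  | mid (l : Fin 3) (i : Fin (n - 1))
  | E
  | F
  deriving DecidableEq

/-- The (asymmetric) edge relation of `G*`: `F` is joined to every level-0 vertex;
the level-0 vertex `j` is joined to the level-1 vertex of index `i` iff the `j`-th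
bit of the binary representation of `i` is 1; consecutive mid levels are joined at
equal indices; and every level-3 vertex is joined to `E`. -/
def gstarRel (n : ℕ) : GStarV n → GStarV n → Prop
  | .F, .lvl0 _ => True
  | .lvl0 j, .mid l i => (l : ℕ) = 0 ∧ Nat.testBit (i + 1) j = true
  | .mid l i, .mid l' i' => i = i' ∧ (l' : ℕ) = (l : ℕ) + 1
  | .mid l _, .E => (l : ℕ) = 2
  | _, _ => False

/-- The graph `G*`. -/
def GStar (n : ℕ) : SimpleGraph (GStarV n) where
  Adj a b := gstarRel n a b ∨ gstarRel n b a
  symm := ⟨fun _ _ h => Or.symm h⟩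
  loopless := ⟨by
    rintro a (h | h) <;> cases a <;> simp [gstarRel] at h⟩

namespace GStarAux

open SimpleGraph

variable {n : ℕ}

/-- The distance-from-`F` potential. -/
def fF {n : ℕ} : GStarV n → ℕ
  | .F => 0
  | .lvl0 _ => 1
  | .mid l _ => (l : ℕ) + 2
  | .E => 5

/-- The distance-from-`lvl0 j` potential (with a harmless value at `E`). -/
def gf {n : ℕ} (j : Fin (Nat.clog 2 n)) : GStarV n → ℕ
  | .F => 1
  | .lvl0 j' => if j' = j then 0 else 2
  | .mid l i => if Nat.testBit ((i : ℕ) + 1) (j : ℕ) then (l : ℕ) + 1 else (l : ℕ) + 3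
  | .E => 4

lemma fF_lip : ∀ a b : GStarV n, (GStar n).Adj a b → fF b ≤ fF a + 1 := by
  have key : ∀ a b : GStarV n, gstarRel n a b → fF b ≤ fF a + 1 ∧ fF a ≤ fF b + 1 := by
    intro a b h
    cases a <;> cases b <;> simp [gstarRel] at h <;> simp [fF] <;> omega
  rintro a b (h | h)
  exacts [(key a b h).1, (key b a h).2]

lemma gf_lip (j : Fin (Nat.clog 2 n)) :
    ∀ a b : GStarV n, (GStar n).Adj a b → gf j b ≤ gf j a + 1 := by
  have key : ∀ a b : GStarV n, gstarRel n a b → gf j b ≤ gf j a + 1 ∧ gf j a ≤ gf j b + 1 := by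
    intro a b h
    cases a with
    | F =>
      cases b <;> simp [gstarRel] at h <;> simp [gf] <;> split_ifs <;> omega
    | lvl0 j' =>
      cases b <;> simp [gstarRel] at h
      case mid l i =>
        obtain ⟨h1, h2⟩ := h
        by_cases hjj : j' = j
        · subst hjj
          simp [gf, h1, h2]
        · simp [gf, hjj]
          split_ifs <;> omega
    | mid l i =>
      cases b <;> simp [gstarRel] at h
      case mid l' i' =>
        obtain ⟨rfl, hl⟩ := h
        simp [gf]
        split_ifs <;> omega
      case E =>
        simp [gf]
        split_ifs <;> omega
    | E => cases b <;> simp [gstarRel] at h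
  rintro a b (h | h)
  exacts [(key a b h).1, (key b a h).2]

lemma walk_bound {V : Type*} {G : SimpleGraph V} (f : V → ℕ)
    (hf : ∀ a b, G.Adj a b → f b ≤ f a + 1) {u v : V} (p : G.Walk u v) :
    f u ≤ f v + p.length := by
  induction p with
  | nil => simp
  | cons h p ih =>
    have h1 := hf _ _ h.symm
    simp only [SimpleGraph.Walk.length_cons]
    omega

lemma dist_lower {V : Type*} {G : SimpleGraph V} (f : V → ℕ)
    (hf : ∀ a b, G.Adj a b → f b ≤ f a + 1) {u v : V} (h : G.Reachable u v) :
    f u ≤ f v + G.dist u v := by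
  obtain ⟨p, hp⟩ := h.exists_walk_length_eq_dist
  rw [← hp]
  exact walk_bound f hf p

lemma adjF0 (j : Fin (Nat.clog 2 n)) : (GStar n).Adj .F (.lvl0 j) := Or.inl trivial

lemma adj0m (j : Fin (Nat.clog 2 n)) (l : Fin 3) (i : Fin (n - 1)) (h0 : (l : ℕ) = 0)
    (hb : Nat.testBit ((i : ℕ) + 1) (j : ℕ) = true) :
    (GStar n).Adj (.lvl0 j) (.mid l i) := Or.inl ⟨h0, hb⟩

lemma adjmm (l l' : Fin 3) (i : Fin (n - 1)) (h : (l' : ℕ) = (l : ℕ) + 1) :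
    (GStar n).Adj (.mid l i) (.mid l' i) := Or.inl ⟨rfl, h⟩

lemma adjmE (l : Fin 3) (i : Fin (n - 1)) (h : (l : ℕ) = 2) :
    (GStar n).Adj (.mid l i) .E := Or.inl h

lemma ilt (hn : 1 < n) (i : Fin (n - 1)) : (i : ℕ) + 1 < 2 ^ Nat.clog 2 n := by
  have h1 : (i : ℕ) < n - 1 := i.isLt
  have h2 : n ≤ 2 ^ Nat.clog 2 n := Nat.le_pow_clog (by norm_num) n
  omega

lemma exists_bit (hn : 1 < n) (i : Fin (n - 1)) :
    ∃ j : Fin (Nat.clog 2 n), Nat.testBit ((i : ℕ) + 1) (j : ℕ) = true := by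
  obtain ⟨k, hk, -⟩ := Nat.exists_most_significant_bit (show (i : ℕ) + 1 ≠ 0 by omega)
  have hlt := ilt hn i
  have hkc : k < Nat.clog 2 n := by
    by_contra h
    have : (i : ℕ) + 1 < 2 ^ k :=
      lt_of_lt_of_le hlt (Nat.pow_le_pow_right (by norm_num) (le_of_not_gt h))
    rw [Nat.testBit_eq_false_of_lt this] at hk
    exact Bool.noConfusion hk
  exact ⟨⟨k, hkc⟩, hk⟩

lemma exists_diff_bit (hn : 1 < n) {i i' : Fin (n - 1)} (h : i ≠ i') :
    ∃ j : Fin (Nat.clog 2 n),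
      Nat.testBit ((i : ℕ) + 1) (j : ℕ) ≠ Nat.testBit ((i' : ℕ) + 1) (j : ℕ) := by
  by_contra hc
  push_neg at hc
  apply h
  have heq : (i : ℕ) + 1 = (i' : ℕ) + 1 := by
    apply Nat.eq_of_testBit_eq
    intro k
    by_cases hk : k < Nat.clog 2 n
    · exact hc ⟨k, hk⟩
    · rw [Nat.testBit_eq_false_of_lt, Nat.testBit_eq_false_of_lt] <;>
        exact lt_of_lt_of_le (ilt hn _) (Nat.pow_le_pow_right (by norm_num) (le_of_not_gt hk))
  exact Fin.ext (by omega)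

lemma exists_descend (l : Fin 3) (i : Fin (n - 1)) (j : Fin (Nat.clog 2 n))
    (hb : Nat.testBit ((i : ℕ) + 1) (j : ℕ) = true) :
    ∃ p : (GStar n).Walk (.mid l i) (.lvl0 j), p.length = (l : ℕ) + 1 := by
  rcases l with ⟨(_ | _ | _ | lv), hl⟩
  · exact ⟨.cons (adj0m j _ i rfl hb).symm .nil, by simp⟩
  · exact ⟨.cons (adjmm ⟨0, by omega⟩ _ i rfl).symm
      (.cons (adj0m j _ i rfl hb).symm .nil), by simp⟩
  · exact ⟨.cons (adjmm ⟨1, by omega⟩ _ i rfl).symm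
      (.cons (adjmm ⟨0, by omega⟩ _ i rfl).symm
      (.cons (adj0m j _ i rfl hb).symm .nil)), by simp⟩
  · omega

lemma distF (hn : 1 < n) (v : GStarV n) : (GStar n).dist GStarV.F v = fF v := by
  obtain ⟨p, hp⟩ : ∃ p : (GStar n).Walk GStarV.F v, p.length = fF v := by
    cases v with
    | F => exact ⟨.nil, rfl⟩
    | lvl0 j => exact ⟨.cons (adjF0 j) .nil, rfl⟩
    | mid l i =>
      obtain ⟨j, hj⟩ := exists_bit hn i
      obtain ⟨q, hq⟩ := exists_descend l i j hj
      refine ⟨(q.append (.cons (adjF0 j).symm .nil)).reverse, ?_⟩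
      simp [fF, hq]
    | E =>
      have hi : 0 < n - 1 := by omega
      obtain ⟨j, hj⟩ := exists_bit hn (⟨0, hi⟩ : Fin (n - 1))
      obtain ⟨q, hq⟩ := exists_descend ⟨2, by omega⟩ (⟨0, hi⟩ : Fin (n - 1)) j hj
      refine ⟨((Walk.cons (adjmE ⟨2, by omega⟩ _ rfl).symm
        (q.append (.cons (adjF0 j).symm .nil))).reverse), ?_⟩
      simp [fF, hq]
  have h1 := SimpleGraph.dist_le p
  have h2 := dist_lower fF fF_lip p.reverse.reachable
  rw [SimpleGraph.dist_comm] at h2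
  have h3 : fF (GStarV.F : GStarV n) = 0 := rfl
  omega

lemma dist_mid (hn : 1 < n) (l : Fin 3) (i : Fin (n - 1)) (j : Fin (Nat.clog 2 n)) :
    (GStar n).dist (GStarV.mid l i) (GStarV.lvl0 j) = gf j (GStarV.mid l i) := by
  obtain ⟨p, hp⟩ : ∃ p : (GStar n).Walk (.mid l i) (.lvl0 j),
      p.length = gf j (GStarV.mid l i) := by
    cases hb : Nat.testBit ((i : ℕ) + 1) (j : ℕ) with
    | true =>
      obtain ⟨q, hq⟩ := exists_descend l i j hb
      exact ⟨q, by simp [gf, hb, hq]⟩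
    | false =>
      obtain ⟨j', hj'⟩ := exists_bit hn i
      obtain ⟨q, hq⟩ := exists_descend l i j' hj'
      refine ⟨q.append (.cons (adjF0 j').symm (.cons (adjF0 j) .nil)), ?_⟩
      simp [gf, hb, hq]
  have h1 := SimpleGraph.dist_le p
  have h2 := dist_lower (gf j) (gf_lip j) p.reachable
  have h3 : gf j (GStarV.lvl0 j) = 0 := by simp [gf]
  omega

end GStarAux

open GStarAux SimpleGraph in
/-- Claim 4: for every `n > 1`, the set `S* = {level-0 vertices} ∪ {F}` is a
resolving set of `G*`; consequently `β(G*) ≤ ⌈log₂ n⌉ + 1`. -/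
theorem stmt_5 (n : ℕ) (hn : 1 < n) :
    resolves (GStar n) {v : GStarV n | (∃ j, v = GStarV.lvl0 j) ∨ v = GStarV.F} ∧
    metricDim (GStar n) ≤ Nat.clog 2 n + 1 := by
  have hres : resolves (GStar n)
      {v : GStarV n | (∃ j, v = GStarV.lvl0 j) ∨ v = GStarV.F} := by
    intro a b hab
    by_cases hfe : fF a = fF b
    · rcases a with j1 | ⟨l1, i1⟩ | - | - <;> rcases b with j2 | ⟨l2, i2⟩ | - | - <;>
        simp only [fF] at hfe <;>
        first
        | omega
        | exact absurd rfl hab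
        | skip
      · -- lvl0 j1 vs lvl0 j2
        refine ⟨GStarV.lvl0 j1, Or.inl ⟨j1, rfl⟩, ?_⟩
        rw [SimpleGraph.dist_self]
        intro h0
        have hr : (GStar n).Reachable (GStarV.lvl0 j2) (GStarV.lvl0 j1) :=
          ((adjF0 j2).reachable.symm).trans (adjF0 j1).reachable
        exact (SimpleGraph.dist_ne_zero_iff_ne_and_reachable.mpr ⟨Ne.symm hab, hr⟩) h0.symm
      · -- mid l1 i1 vs mid l2 i2
        obtain rfl : l1 = l2 := Fin.ext (by omega)
        have hi : i1 ≠ i2 := fun h => hab (by rw [h])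
        obtain ⟨j, hj⟩ := exists_diff_bit hn hi
        refine ⟨GStarV.lvl0 j, Or.inl ⟨j, rfl⟩, ?_⟩
        rw [dist_mid hn, dist_mid hn]
        cases hb1 : Nat.testBit ((i1 : ℕ) + 1) (j : ℕ) <;>
          cases hb2 : Nat.testBit ((i2 : ℕ) + 1) (j : ℕ) <;>
          simp [gf, hb1, hb2] at hj ⊢ <;> omega
    · refine ⟨GStarV.F, Or.inr rfl, ?_⟩
      rw [SimpleGraph.dist_comm (u := a), distF hn a,
        SimpleGraph.dist_comm (u := b), distF hn b]
      exact hfe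
  refine ⟨hres, ?_⟩
  apply Nat.sInf_le
  refine ⟨(Finset.univ.image (GStarV.lvl0 (n := n))) ∪ {GStarV.F}, ?_, ?_⟩
  · rw [Finset.card_union_of_disjoint (by simp)]
    rw [Finset.card_image_of_injective _ (fun a b h => by injection h)]
    simp
  · have hset : (((Finset.univ.image (GStarV.lvl0 (n := n))) ∪ {GStarV.F} : Finset _) :
        Set (GStarV n)) = {v : GStarV n | (∃ j, v = GStarV.lvl0 j) ∨ v = GStarV.F} := by
      ext v
      simp [eq_comm, or_comm]
    rw [hset]
    exact hres
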